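/- Let Λ be a k-graph with a self-similar action of a group G. Then Λ is G-cofinal if and only if for all v, w ∈ Λ^0 there exists p ∈ ℕ^k such that for every μ ∈ wΛ^p there exist g ∈ G and λ ∈ Λ with r(λ) = g·v and s(λ) = s(μ) (i.e., (G·v)Λs(μ) ≠ ∅ for all μ ∈ wΛ^p). -/

import Mathlib

namespace SSKG

/-- `ℕ^k`. -/
abbrev NK (k : ℕ) := Fin k → ℕ
/-- `ℤ^k`. -/
abbrev ZK (k : ℕ) := Fin k → ℤ

lemma le0 {k : ℕ} (p : NK k) : 0 ≤ p := Pi.le_def.mpr fun i => Nat.zero_le (p i)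

/-- A (row-finite, source-free, countable) `k`-graph: a countable small category with a
degree functor `d` into `ℕ^k` satisfying the unique factorization property. -/
structure KGraph (k : ℕ) where
  Obj : Type
  Mor : Type
  countable_mor : Countable Mor
  r : Mor → Obj
  s : Mor → Obj
  d : Mor → NK k
  ofObj : Obj → Mor
  comp : (μ ν : Mor) → s μ = r ν → Mor
  r_ofObj : ∀ v, r (ofObj v) = v
  s_ofObj : ∀ v, s (ofObj v) = v
  d_ofObj : ∀ v, d (ofObj v) = 0
  eq_ofObj_of_d_eq_zero : ∀ μ, d μ = 0 → ∃ v, μ = ofObj v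
  r_comp : ∀ μ ν h, r (comp μ ν h) = r μ
  s_comp : ∀ μ ν h, s (comp μ ν h) = s ν
  d_comp : ∀ μ ν h, d (comp μ ν h) = d μ + d ν
  comp_ofObj : ∀ μ (h : s μ = r (ofObj (s μ))), comp μ (ofObj (s μ)) h = μ
  ofObj_comp : ∀ μ (h : s (ofObj (r μ)) = r μ), comp (ofObj (r μ)) μ h = μ
  comp_assoc : ∀ μ ν ρ (h₁ : s μ = r ν) (h₂ : s ν = r ρ),
      comp (comp μ ν h₁) ρ ((s_comp μ ν h₁).trans h₂)
        = comp μ (comp ν ρ h₂) (h₁.trans (r_comp ν ρ h₂).symm)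
  factor_exists : ∀ μ (n m : NK k), d μ = n + m →
      ∃ (α β : Mor) (h : s α = r β), d α = n ∧ d β = m ∧ comp α β h = μ
  factor_unique : ∀ (α β α' β' : Mor) (h : s α = r β) (h' : s α' = r β'),
      d α = d α' → comp α β h = comp α' β' h' → α = α' ∧ β = β'
  row_finite : ∀ (v : Obj) (n : NK k), {μ : Mor | r μ = v ∧ d μ = n}.Finite
  no_sources : ∀ (v : Obj) (n : NK k), ∃ μ : Mor, r μ = v ∧ d μ = n

lemma KGraph.comp_congr {k : ℕ} (Λ : KGraph k) {μ ν ν' : Λ.Mor} (hν : ν = ν')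
    (h : Λ.s μ = Λ.r ν) (h' : Λ.s μ = Λ.r ν') : Λ.comp μ ν h = Λ.comp μ ν' h' := by
  cases hν; rfl

/-- An edge: a morphism of degree `e_i` for some `i`. -/
def IsEdge {k : ℕ} (Λ : KGraph k) (μ : Λ.Mor) : Prop := ∃ i : Fin k, Λ.d μ = Pi.single i 1

/-- Membership in `Λ⁰ ∪ Λᵉ` (a vertex or an edge). -/
def VorE {k : ℕ} (Λ : KGraph k) (μ : Λ.Mor) : Prop := Λ.d μ = 0 ∨ IsEdge Λ μ

/-- A self-similar action of a group `G` on a `k`-graph `Λ`: an action by degree-,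
range- and source-preserving automorphisms, together with a restriction map
`(g, μ) ↦ g|_μ` satisfying the Exel–Pardo style axioms. -/
structure SelfSimilar (k : ℕ) (G : Type) [Group G] (Λ : KGraph k) where
  act : G → Λ.Mor → Λ.Mor
  res : G → Λ.Mor → G
  act_one : ∀ μ, act 1 μ = μ
  act_mul : ∀ g h μ, act (g * h) μ = act g (act h μ)
  act_d : ∀ g μ, Λ.d (act g μ) = Λ.d μ
  act_ofObj_r : ∀ g μ, act g (Λ.ofObj (Λ.r μ)) = Λ.ofObj (Λ.r (act g μ))
  act_ofObj_s : ∀ g μ, act g (Λ.ofObj (Λ.s μ)) = Λ.ofObj (Λ.s (act g μ))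
  compat : ∀ g μ ν (h : Λ.s μ = Λ.r ν), Λ.s (act g μ) = Λ.r (act (res g μ) ν)
  act_comp : ∀ g μ ν (h : Λ.s μ = Λ.r ν),
      act g (Λ.comp μ ν h) = Λ.comp (act g μ) (act (res g μ) ν) (compat g μ ν h)
  res_ofObj : ∀ g v, res g (Λ.ofObj v) = g
  res_comp : ∀ g μ ν (h : Λ.s μ = Λ.r ν), res g (Λ.comp μ ν h) = res (res g μ) ν
  res_one : ∀ μ, res 1 μ = 1
  res_mul : ∀ g h μ, res (g * h) μ = res g (act h μ) * res h μ

variable {k : ℕ} {G : Type} [Group G] {Λ : KGraph k}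

/-- The induced action of `G` on the vertices `Λ⁰`. -/
def SelfSimilar.actV (S : SelfSimilar k G Λ) (g : G) (v : Λ.Obj) : Λ.Obj :=
  Λ.s (S.act g (Λ.ofObj v))

/-- The action is pseudo free. -/
def SelfSimilar.PseudoFree (S : SelfSimilar k G Λ) : Prop :=
  ∀ (g : G) (μ : Λ.Mor), S.act g μ = μ → S.res g μ = 1 → g = 1

/-- An infinite path in `Λ`: a degree-preserving functor `Ω_k → Λ`, recorded through
its segments `x(p,q)` for `p ≤ q`. -/
structure InfPath {k : ℕ} (Λ : KGraph k) where
  seg : ∀ p q : NK k, p ≤ q → Λ.Mor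
  d_seg : ∀ p q (h : p ≤ q), Λ.d (seg p q h) = fun i => q i - p i
  src_seg : ∀ p q m (h₁ : p ≤ q) (h₂ : q ≤ m), Λ.s (seg p q h₁) = Λ.r (seg q m h₂)
  comp_seg : ∀ p q m (h₁ : p ≤ q) (h₂ : q ≤ m),
      Λ.comp (seg p q h₁) (seg q m h₂) (src_seg p q m h₁ h₂) = seg p m (h₁.trans h₂)

lemma InfPath.ext' {x y : InfPath Λ} (h : x.seg = y.seg) : x = y := by
  cases x; cases y; cases h; rfl

/-- The shift `σ^p(x)`. -/
def InfPath.shift (x : InfPath Λ) (p : NK k) : InfPath Λ where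
  seg m n h := x.seg (m + p) (n + p) (add_le_add_left h p)
  d_seg m n h := by
    rw [x.d_seg]; funext i; simp only [Pi.add_apply]; omega
  src_seg m n l h₁ h₂ := x.src_seg _ _ _ _ _
  comp_seg m n l h₁ h₂ := x.comp_seg _ _ _ _ _

/-- The action of `G` on infinite paths: `(g·x)(p,q) = g|_{x(0,p)} · x(p,q)`. -/
def SelfSimilar.actInf (S : SelfSimilar k G Λ) (g : G) (x : InfPath Λ) : InfPath Λ where
  seg p q h := S.act (S.res g (x.seg 0 p (le0 p))) (x.seg p q h)
  d_seg p q h := by rw [S.act_d, x.d_seg]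
  src_seg p q m h₁ h₂ := by
    have key : S.res g (x.seg 0 q (le0 q))
        = S.res (S.res g (x.seg 0 p (le0 p))) (x.seg p q h₁) := by
      rw [← S.res_comp g (x.seg 0 p (le0 p)) (x.seg p q h₁) (x.src_seg 0 p q (le0 p) h₁),
        x.comp_seg 0 p q (le0 p) h₁]
    beta_reduce
    rw [key]
    exact S.compat _ _ _ (x.src_seg p q m h₁ h₂)
  comp_seg p q m h₁ h₂ := by
    have key : S.res g (x.seg 0 q (le0 q))
        = S.res (S.res g (x.seg 0 p (le0 p))) (x.seg p q h₁) := by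
      rw [← S.res_comp g (x.seg 0 p (le0 p)) (x.seg p q h₁) (x.src_seg 0 p q (le0 p) h₁),
        x.comp_seg 0 p q (le0 p) h₁]
    beta_reduce
    rw [← x.comp_seg p q m h₁ h₂, S.act_comp]
    exact Λ.comp_congr (by rw [key]) _ _

/-- The restriction cocycle `g|_x : ℕ^k → G`, `g|_x(p) = g|_{x(0,p)}`. -/
def SelfSimilar.resInf (S : SelfSimilar k G Λ) (g : G) (x : InfPath Λ) : NK k → G :=
  fun p => S.res g (x.seg 0 p (le0 p))

/-- `IsConcat μ x y` says that `y = μx`, the concatenation of the finite path `μ`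
(with `x(0,0) = s(μ)`) and the infinite path `x`. -/
def IsConcat (Λ : KGraph k) (μ : Λ.Mor) (x y : InfPath Λ) : Prop :=
  x.seg 0 0 le_rfl = Λ.ofObj (Λ.s μ) ∧
  y.seg 0 (Λ.d μ) (le0 _) = μ ∧
  ∀ m n (h : m ≤ n), y.seg (Λ.d μ + m) (Λ.d μ + n) (add_le_add_right h _) = x.seg m n h

/-- The cylinder set `Z(μ)`. -/
def cylinder (Λ : KGraph k) (μ : Λ.Mor) : Set (InfPath Λ) :=
  {x : InfPath Λ | x.seg 0 (Λ.d μ) (le0 _) = μ}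

/-- The cylinder-set topology on `Λ^∞`. -/
instance instTopInfPath (Λ : KGraph k) : TopologicalSpace (InfPath Λ) :=
  TopologicalSpace.generateFrom {U | ∃ μ : Λ.Mor, U = cylinder Λ μ}

/-- `Λ` is `G`-cofinal. -/
def GCofinal (S : SelfSimilar k G Λ) : Prop :=
  ∀ (x : InfPath Λ) (v : Λ.Obj), ∃ (p : NK k) (μ : Λ.Mor) (g : G),
    Λ.ofObj (Λ.s μ) = x.seg p p le_rfl ∧ Λ.r μ = S.actV g v

/-- `Λ` is `G`-aperiodic. -/
def GAperiodic (S : SelfSimilar k G Λ) : Prop :=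
  ∀ v : Λ.Obj, ∃ x : InfPath Λ, x.seg 0 0 le_rfl = Λ.ofObj v ∧
    ∀ (g : G) (p q : NK k), g ≠ 1 ∨ p ≠ q → x.shift p ≠ S.actInf g (x.shift q)

/-- A subset `U ⊆ Λ^∞` is invariant for the self-similar action. -/
def InvariantSet (S : SelfSimilar k G Λ) (U : Set (InfPath Λ)) : Prop :=
  ∀ (g : G) (μ ν : Λ.Mor) (x z y : InfPath Λ),
    Λ.s μ = S.actV g (Λ.s ν) → IsConcat Λ ν x z → IsConcat Λ μ (S.actInf g x) y →
    z ∈ U → y ∈ U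

/-- The minimal common extensions `Λ^min(μ,ν)`. -/
def Lmin (Λ : KGraph k) (μ ν : Λ.Mor) : Set (Λ.Mor × Λ.Mor) :=
  {p | ∃ (h₁ : Λ.s μ = Λ.r p.1) (h₂ : Λ.s ν = Λ.r p.2),
      Λ.comp μ p.1 h₁ = Λ.comp ν p.2 h₂ ∧ Λ.d (Λ.comp μ p.1 h₁) = Λ.d μ ⊔ Λ.d ν}

/-- The group `C(ℕ^k, G)` of all functions `ℕ^k → G` under pointwise multiplication. -/
abbrev CkG (k : ℕ) (G : Type) [Group G] := NK k → G

/-- The normal subgroup of eventually trivial functions. -/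
def tailTrivial (k : ℕ) (G : Type) [Group G] : Subgroup (CkG k G) where
  carrier := {f | ∃ z : NK k, ∀ p, z ≤ p → f p = 1}
  one_mem' := ⟨0, fun _ _ => rfl⟩
  mul_mem' := by
    rintro f g ⟨z₁, h₁⟩ ⟨z₂, h₂⟩
    exact ⟨z₁ ⊔ z₂, fun p hp => by
      rw [Pi.mul_apply, h₁ p (le_trans le_sup_left hp), h₂ p (le_trans le_sup_right hp),
        one_mul]⟩
  inv_mem' := by
    rintro f ⟨z, h⟩
    exact ⟨z, fun p hp => by rw [Pi.inv_apply, h p hp, inv_one]⟩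

instance tailTrivialNormal (k : ℕ) (G : Type) [Group G] : (tailTrivial k G).Normal := by
  constructor
  rintro f ⟨z, hz⟩ g
  exact ⟨z, fun p hp => by
    simp only [Pi.mul_apply, Pi.inv_apply, hz p hp, mul_one, mul_inv_cancel]⟩

/-- The quotient group `Q(ℕ^k, G) = C(ℕ^k,G)/∼`. -/
abbrev QkG (k : ℕ) (G : Type) [Group G] := CkG k G ⧸ tailTrivial k G

/-- Coercion `ℕ^k → ℤ^k`. -/
def toZ {k : ℕ} (p : NK k) : ZK k := fun i => (p i : ℤ)

open scoped Classical in
/-- The translation `T_z` on functions `ℕ^k → G`, for `z ∈ ℤ^k`. -/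
noncomputable def transFun {k : ℕ} {G : Type} [Group G] (z : ZK k) (f : CkG k G) : CkG k G :=
  fun p => if (∀ i, z i ≤ (p i : ℤ)) then f (fun i => ((p i : ℤ) - z i).toNat) else 1

/-- The ambient space `Λ^∞ × (Q(ℕ^k,G) ⋊ ℤ^k) × Λ^∞` containing the self-similar
path groupoid (as a set). -/
abbrev Triple (k : ℕ) (G : Type) [Group G] (Λ : KGraph k) :=
  InfPath Λ × (QkG k G × ZK k) × InfPath Λ

/-- The basic set `Z(μ, g, ν)` of the self-similar path groupoid. -/
def Zset (S : SelfSimilar k G Λ) (μ : Λ.Mor) (g : G) (ν : Λ.Mor) : Set (Triple k G Λ) :=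
  {t | ∃ x y z : InfPath Λ, IsConcat Λ ν x z ∧ IsConcat Λ μ (S.actInf g x) y ∧
    t = (y, ((QuotientGroup.mk (transFun (toZ (Λ.d μ)) (S.resInf g x)) : QkG k G),
      toZ (Λ.d μ) - toZ (Λ.d ν)), z)}

/-- The family `B_{G,Λ}` of basic sets. -/
def BGL (S : SelfSimilar k G Λ) : Set (Set (Triple k G Λ)) :=
  {A | ∃ (μ ν : Λ.Mor) (g : G), Λ.s μ = S.actV g (Λ.s ν) ∧ A = Zset S μ g ν}

/-- The self-similar path groupoid `G_{G,Λ}` (as a set of triples). -/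
def Gpd (S : SelfSimilar k G Λ) : Set (Triple k G Λ) :=
  {t | ∃ (g : G) (μ ν : Λ.Mor), Λ.s μ = S.actV g (Λ.s ν) ∧ t ∈ Zset S μ g ν}

/-- The topology on `G_{G,Λ}` generated by the basic sets. -/
def gpdTop (S : SelfSimilar k G Λ) : TopologicalSpace {t : Triple k G Λ // t ∈ Gpd S} :=
  TopologicalSpace.generateFrom
    {A | ∃ (μ ν : Λ.Mor) (g : G), A = {t | (t : Triple k G Λ) ∈ Zset S μ g ν}}


/- ### Auxiliary development for stmt11 -/

section Aux

variable {k : ℕ} {Λ : KGraph k}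

lemma KGraph.comp_congr' (Λ : KGraph k) {μ μ' ν : Λ.Mor} (hμ : μ = μ')
    (h : Λ.s μ = Λ.r ν) (h' : Λ.s μ' = Λ.r ν) : Λ.comp μ ν h = Λ.comp μ' ν h' := by
  cases hμ; rfl

/-- `β` is the segment of `μ` from degree `p` to degree `q`. -/
def IsSeg (Λ : KGraph k) (μ : Λ.Mor) (p q : NK k) (β : Λ.Mor) : Prop :=
  ∃ (α γ : Λ.Mor) (h₂ : Λ.s β = Λ.r γ) (h₁ : Λ.s α = Λ.r (Λ.comp β γ h₂)),
    Λ.d α = p ∧ Λ.d β = (fun i => q i - p i) ∧ Λ.comp α (Λ.comp β γ h₂) h₁ = μ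

lemma isSeg_d {μ β : Λ.Mor} {p q : NK k} (h : IsSeg Λ μ p q β) :
    Λ.d β = fun i => q i - p i := by
  obtain ⟨_, _, _, _, _, hd, _⟩ := h
  exact hd

lemma isSeg_exists (Λ : KGraph k) (μ : Λ.Mor) (p q : NK k) (hpq : p ≤ q) (hq : q ≤ Λ.d μ) :
    ∃ β, IsSeg Λ μ p q β := by
  obtain ⟨α, δ, h₁, hdα, hdδ, hc⟩ := Λ.factor_exists μ p (fun i => Λ.d μ i - p i)
    (funext fun i => by
      have h1 : p i ≤ q i := hpq i; have h2 : q i ≤ Λ.d μ i := hq i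
      simp only [Pi.add_apply]; omega)
  obtain ⟨β, γ, h₂, hdβ, hdγ, hc2⟩ := Λ.factor_exists δ (fun i => q i - p i)
    (fun i => Λ.d μ i - q i)
    (by
      rw [hdδ]; funext i
      have h1 : p i ≤ q i := hpq i; have h2 : q i ≤ Λ.d μ i := hq i
      simp only [Pi.add_apply]; omega)
  have h₁' : Λ.s α = Λ.r (Λ.comp β γ h₂) := by rw [hc2]; exact h₁
  exact ⟨β, α, γ, h₂, h₁', hdα, hdβ, (Λ.comp_congr hc2 h₁' h₁).trans hc⟩

lemma isSeg_unique (Λ : KGraph k) (μ : Λ.Mor) (p q : NK k) (hpq : p ≤ q)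
    {β β' : Λ.Mor} (h : IsSeg Λ μ p q β) (h' : IsSeg Λ μ p q β') : β = β' := by
  obtain ⟨α, γ, h₂, h₁, hdα, hdβ, hc⟩ := h
  obtain ⟨α', γ', h₂', h₁', hdα', hdβ', hc'⟩ := h'
  have hαβ : Λ.s α = Λ.r β := h₁.trans (Λ.r_comp β γ h₂)
  have hαβ' : Λ.s α' = Λ.r β' := h₁'.trans (Λ.r_comp β' γ' h₂')
  have e1 := (Λ.comp_assoc α β γ hαβ h₂).trans hc
  have e1' := (Λ.comp_assoc α' β' γ' hαβ' h₂').trans hc'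
  have hd : Λ.d (Λ.comp α β hαβ) = Λ.d (Λ.comp α' β' hαβ') := by
    rw [Λ.d_comp, Λ.d_comp, hdα, hdβ, hdα', hdβ']
  have huniq := Λ.factor_unique (Λ.comp α β hαβ) γ (Λ.comp α' β' hαβ') γ'
    ((Λ.s_comp α β hαβ).trans h₂) ((Λ.s_comp α' β' hαβ').trans h₂') hd
    (e1.trans e1'.symm)
  exact (Λ.factor_unique α β α' β' hαβ hαβ' (hdα.trans hdα'.symm) huniq.1).2

lemma isSeg_comp (Λ : KGraph k) {μ δ : Λ.Mor} (h : Λ.s μ = Λ.r δ) {p q : NK k} {β : Λ.Mor}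
    (hIs : IsSeg Λ μ p q β) : IsSeg Λ (Λ.comp μ δ h) p q β := by
  obtain ⟨α, γ, h₂, h₁, hdα, hdβ, hc⟩ := hIs
  have hsγ : Λ.s γ = Λ.r δ := by
    rw [← h]; conv_rhs => rw [← hc]
    rw [Λ.s_comp, Λ.s_comp]
  have hsγ' : Λ.s (Λ.comp β γ h₂) = Λ.r δ := (Λ.s_comp β γ h₂).trans hsγ
  have h₂'' : Λ.s β = Λ.r (Λ.comp γ δ hsγ) := h₂.trans (Λ.r_comp γ δ hsγ).symm
  have h₁'' : Λ.s α = Λ.r (Λ.comp β (Λ.comp γ δ hsγ) h₂'') :=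
    (h₁.trans (Λ.r_comp β γ h₂)).trans (Λ.r_comp β (Λ.comp γ δ hsγ) h₂'').symm
  refine ⟨α, Λ.comp γ δ hsγ, h₂'', h₁'', hdα, hdβ, ?_⟩
  have e2 := Λ.comp_assoc β γ δ h₂ hsγ
  have e1 := Λ.comp_assoc α (Λ.comp β γ h₂) δ h₁ hsγ'
  exact ((Λ.comp_congr e2.symm h₁''
      (h₁.trans (Λ.r_comp (Λ.comp β γ h₂) δ hsγ').symm)).trans e1.symm).trans
    (Λ.comp_congr' hc ((Λ.s_comp α (Λ.comp β γ h₂) h₁).trans hsγ') h)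

lemma isSeg_glue (Λ : KGraph k) {μ : Λ.Mor} {p q m : NK k} {β β' : Λ.Mor}
    (hpq : p ≤ q) (hqm : q ≤ m)
    (h : IsSeg Λ μ p q β) (h' : IsSeg Λ μ q m β') :
    ∃ hs : Λ.s β = Λ.r β', IsSeg Λ μ p m (Λ.comp β β' hs) := by
  obtain ⟨α, γ, h₂, h₁, hdα, hdβ, hc⟩ := h
  obtain ⟨α', γ', h₂', h₁', hdα', hdβ', hc'⟩ := h'
  have hαβ : Λ.s α = Λ.r β := h₁.trans (Λ.r_comp β γ h₂)
  have e1 := (Λ.comp_assoc α β γ hαβ h₂).trans hc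
  have hdcomp : Λ.d (Λ.comp α β hαβ) = Λ.d α' := by
    rw [Λ.d_comp, hdα, hdβ, hdα']
    funext i; have h1 : p i ≤ q i := hpq i
    simp only [Pi.add_apply]; omega
  obtain ⟨eαβ, eγ⟩ := Λ.factor_unique (Λ.comp α β hαβ) γ α' (Λ.comp β' γ' h₂')
    ((Λ.s_comp α β hαβ).trans h₂) h₁' hdcomp (e1.trans hc'.symm)
  have hs : Λ.s β = Λ.r β' := by
    have hsβ : Λ.s β = Λ.s α' := by rw [← eαβ, Λ.s_comp]
    rw [hsβ, h₁', Λ.r_comp]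
  have h₂'' : Λ.s (Λ.comp β β' hs) = Λ.r γ' := (Λ.s_comp β β' hs).trans h₂'
  have h₁'' : Λ.s α = Λ.r (Λ.comp (Λ.comp β β' hs) γ' h₂'') :=
    hαβ.trans (((Λ.r_comp (Λ.comp β β' hs) γ' h₂'').trans (Λ.r_comp β β' hs)).symm)
  refine ⟨hs, α, γ', h₂'', h₁'', hdα, ?_, ?_⟩
  · rw [Λ.d_comp, hdβ, hdβ']
    funext i; have h1 : p i ≤ q i := hpq i; have h2 : q i ≤ m i := hqm i
    simp only [Pi.add_apply]; omega
  · have E : Λ.comp (Λ.comp β β' hs) γ' h₂'' = Λ.comp β γ h₂ :=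
      (Λ.comp_assoc β β' γ' hs h₂').trans
        (Λ.comp_congr eγ.symm (hs.trans (Λ.r_comp β' γ' h₂').symm) h₂)
    exact (Λ.comp_congr E h₁'' h₁).trans hc

lemma isSeg_zero_iff (Λ : KGraph k) (μ : Λ.Mor) (q : NK k) (β : Λ.Mor) :
    IsSeg Λ μ 0 q β ↔ ∃ (γ : Λ.Mor) (h : Λ.s β = Λ.r γ), Λ.d β = q ∧ Λ.comp β γ h = μ := by
  constructor
  · rintro ⟨α, γ, h₂, h₁, hdα, hdβ, hc⟩
    obtain ⟨v0, hv⟩ := Λ.eq_ofObj_of_d_eq_zero α hdα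
    subst hv
    have hv0 : Λ.ofObj v0 = Λ.ofObj (Λ.r (Λ.comp β γ h₂)) :=
      congrArg _ ((Λ.s_ofObj v0).symm.trans h₁)
    have key : Λ.comp (Λ.ofObj v0) (Λ.comp β γ h₂) h₁ = Λ.comp β γ h₂ :=
      (Λ.comp_congr' hv0 h₁ (Λ.s_ofObj _)).trans
        (Λ.ofObj_comp (Λ.comp β γ h₂) (Λ.s_ofObj _))
    refine ⟨γ, h₂, ?_, key.symm.trans hc⟩
    rw [hdβ]; funext i; simp
  · rintro ⟨γ, h, hdβ, hc⟩
    have h₁ : Λ.s (Λ.ofObj (Λ.r β)) = Λ.r (Λ.comp β γ h) :=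
      (Λ.s_ofObj _).trans (Λ.r_comp β γ h).symm
    refine ⟨Λ.ofObj (Λ.r β), γ, h, ?_, Λ.d_ofObj _, ?_, ?_⟩
    · exact h₁
    · rw [hdβ]; funext i; simp
    · have hμ : Λ.ofObj (Λ.r β) = Λ.ofObj (Λ.r (Λ.comp β γ h)) :=
        congrArg Λ.ofObj (Λ.r_comp β γ h).symm
      exact ((Λ.comp_congr' hμ h₁ (Λ.s_ofObj _)).trans
        (Λ.ofObj_comp (Λ.comp β γ h) (Λ.s_ofObj _))).trans hc

end Aux

section Koenig

open CategoryTheory Opposite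

variable {k : ℕ} {G : Type} [Group G] {Λ : KGraph k}

/-- No path from the `G`-orbit of `v` to `s μ`. -/
def BadTo (S : SelfSimilar k G Λ) (v : Λ.Obj) (μ : Λ.Mor) : Prop :=
  ¬ ∃ (g : G) (lam : Λ.Mor), Λ.r lam = S.actV g v ∧ Λ.s lam = Λ.s μ

lemma BadTo.prefixBad {S : SelfSimilar k G Λ} {v : Λ.Obj} {μ γ : Λ.Mor} (h : Λ.s μ = Λ.r γ)
    (hb : BadTo S v (Λ.comp μ γ h)) : BadTo S v μ := by
  rintro ⟨g, lam, hr, hs⟩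
  exact hb ⟨g, Λ.comp lam γ (hs.trans h), by rw [Λ.r_comp]; exact hr,
    by rw [Λ.s_comp, Λ.s_comp]⟩

def cvec (k n : ℕ) : NK k := fun _ => n

lemma cvec_mono {k n m : ℕ} (h : n ≤ m) : cvec k n ≤ cvec k m := fun _ => h

def nmax {k : ℕ} (q : NK k) : ℕ := Finset.univ.sup q

lemma le_cvec_nmax {k : ℕ} (q : NK k) : q ≤ cvec k (nmax q) :=
  fun i => Finset.le_sup (Finset.mem_univ i)

lemma nmax_mono {k : ℕ} {p q : NK k} (h : p ≤ q) : nmax p ≤ nmax q :=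
  Finset.sup_mono_fun fun i _ => h i

/-- The bad paths of degree `(n,…,n)` out of `w`. -/
def badSet (S : SelfSimilar k G Λ) (v w : Λ.Obj) (n : ℕ) : Set Λ.Mor :=
  {μ | Λ.r μ = w ∧ Λ.d μ = cvec k n ∧ BadTo S v μ}

lemma badSet_finite (S : SelfSimilar k G Λ) (v w : Λ.Obj) (n : ℕ) :
    (badSet S v w n).Finite :=
  (Λ.row_finite w (cvec k n)).subset fun μ hμ => ⟨hμ.1, hμ.2.1⟩

/-- The chosen prefix of `μ` of degree `q`. -/
noncomputable def preAt (Λ : KGraph k) (μ : Λ.Mor) (q : NK k) (hq : q ≤ Λ.d μ) : Λ.Mor :=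
  (isSeg_exists Λ μ 0 q (le0 q) hq).choose

lemma preAt_isSeg (Λ : KGraph k) (μ : Λ.Mor) (q : NK k) (hq : q ≤ Λ.d μ) :
    IsSeg Λ μ 0 q (preAt Λ μ q hq) :=
  (isSeg_exists Λ μ 0 q (le0 q) hq).choose_spec

lemma preAt_comp (Λ : KGraph k) (μ : Λ.Mor) (q : NK k) (hq : q ≤ Λ.d μ) :
    ∃ (γ : Λ.Mor) (h : Λ.s (preAt Λ μ q hq) = Λ.r γ),
      Λ.d (preAt Λ μ q hq) = q ∧ Λ.comp (preAt Λ μ q hq) γ h = μ :=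
  (isSeg_zero_iff Λ μ q _).mp (preAt_isSeg Λ μ q hq)

lemma preAt_d (Λ : KGraph k) (μ : Λ.Mor) (q : NK k) (hq : q ≤ Λ.d μ) :
    Λ.d (preAt Λ μ q hq) = q := by
  have h := isSeg_d (preAt_isSeg Λ μ q hq)
  rw [h]; funext i; simp

lemma preAt_eq_of_isSeg (Λ : KGraph k) {μ β : Λ.Mor} {q : NK k} (hq : q ≤ Λ.d μ)
    (h : IsSeg Λ μ 0 q β) : preAt Λ μ q hq = β :=
  isSeg_unique Λ μ 0 q (le0 q) (preAt_isSeg Λ μ q hq) h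

lemma preAt_eq_self (Λ : KGraph k) {μ : Λ.Mor} {q : NK k} (hq : q ≤ Λ.d μ)
    (h : q = Λ.d μ) : preAt Λ μ q hq = μ :=
  preAt_eq_of_isSeg Λ hq ((isSeg_zero_iff Λ μ q μ).mpr
    ⟨Λ.ofObj (Λ.s μ), (Λ.r_ofObj _).symm, h.symm, Λ.comp_ofObj μ ((Λ.r_ofObj _).symm)⟩)

lemma preAt_preAt (Λ : KGraph k) (μ : Λ.Mor) (q q' : NK k) (hq : q ≤ Λ.d μ)
    (hq' : q' ≤ Λ.d (preAt Λ μ q hq)) (hq'' : q' ≤ Λ.d μ) :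
    preAt Λ (preAt Λ μ q hq) q' hq' = preAt Λ μ q' hq'' := by
  obtain ⟨γ, h, hd, hc⟩ := preAt_comp Λ μ q hq
  refine (preAt_eq_of_isSeg Λ hq'' ?_).symm
  have := isSeg_comp Λ h (preAt_isSeg Λ (preAt Λ μ q hq) q' hq')
  rwa [hc] at this

lemma preAt_mem_badSet (S : SelfSimilar k G Λ) (v w : Λ.Obj) {μ : Λ.Mor} {n m : ℕ}
    (hμ : μ ∈ badSet S v w m) (hnm : n ≤ m)
    (hq : cvec k n ≤ Λ.d μ) : preAt Λ μ (cvec k n) hq ∈ badSet S v w n := by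
  obtain ⟨γ, h, hd, hc⟩ := preAt_comp Λ μ (cvec k n) hq
  refine ⟨?_, hd, ?_⟩
  · have := Λ.r_comp _ γ h
    rw [hc] at this
    exact this.symm.trans hμ.1
  · have hb := hμ.2.2
    rw [← hc] at hb
    exact BadTo.prefixBad h hb

/-- The inverse system of bad paths. -/
noncomputable def badFunctor (S : SelfSimilar k G Λ) (v w : Λ.Obj) : ℕᵒᵖ ⥤ Type where
  obj n := ↥(badSet S v w n.unop)
  map {n m} f := TypeCat.ofHom fun μ =>
    ⟨preAt Λ μ.1 (cvec k m.unop) (by rw [μ.2.2.1]; exact cvec_mono (leOfHom f.unop)),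
      preAt_mem_badSet S v w μ.2 (leOfHom f.unop) _⟩
  map_id n := by
    ext μ
    show preAt Λ μ.1 (cvec k n.unop) (le_of_eq μ.2.2.1.symm) = μ.1
    exact preAt_eq_self Λ _ μ.2.2.1.symm
  map_comp {n m l} f g := by
    ext μ
    have hnm : m.unop ≤ n.unop := leOfHom f.unop
    have hml : l.unop ≤ m.unop := leOfHom g.unop
    have hq : cvec k m.unop ≤ Λ.d μ.1 := by rw [μ.2.2.1]; exact cvec_mono hnm
    have hq'' : cvec k l.unop ≤ Λ.d μ.1 := by rw [μ.2.2.1]; exact cvec_mono (hml.trans hnm)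
    have hq' : cvec k l.unop ≤ Λ.d (preAt Λ μ.1 (cvec k m.unop) hq) := by
      rw [preAt_d]; exact cvec_mono hml
    show preAt Λ μ.1 (cvec k l.unop) hq''
        = preAt Λ (preAt Λ μ.1 (cvec k m.unop) hq) (cvec k l.unop) hq'
    exact (preAt_preAt Λ μ.1 (cvec k m.unop) (cvec k l.unop) hq hq' hq'').symm

end Koenig

open CategoryTheory Opposite in
/-- `Λ` is `G`-cofinal iff for all vertices `v, w` there is `p ∈ ℕ^k` such
that `(G·v)Λs(μ) ≠ ∅` for every `μ ∈ wΛ^p`. -/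
theorem stmt11 {k : ℕ} (hk : 0 < k) (G : Type) [Group G] [Countable G]
    (Λ : KGraph k) (S : SelfSimilar k G Λ) :
    GCofinal S ↔ ∀ v w : Λ.Obj, ∃ p : NK k, ∀ μ : Λ.Mor, Λ.r μ = w → Λ.d μ = p →
      ∃ (g : G) (lam : Λ.Mor), Λ.r lam = S.actV g v ∧ Λ.s lam = Λ.s μ := by
  constructor
  · -- hard direction
    intro hcof
    by_contra hcon
    push_neg at hcon
    obtain ⟨v, w, hcon⟩ := hcon
    have hbad : ∀ p : NK k, ∃ μ : Λ.Mor, Λ.r μ = w ∧ Λ.d μ = p ∧ BadTo S v μ := by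
      intro p
      obtain ⟨μ, h1, h2, h3⟩ := hcon p
      refine ⟨μ, h1, h2, ?_⟩
      rintro ⟨g, lam, hg1, hg2⟩
      exact h3 g lam hg1 hg2
    haveI hFin : ∀ j : ℕᵒᵖ, Finite ((badFunctor S v w).obj j) :=
      fun j => Set.Finite.to_subtype (badSet_finite S v w j.unop)
    haveI hNe : ∀ j : ℕᵒᵖ, Nonempty ((badFunctor S v w).obj j) := by
      intro j
      obtain ⟨μ, h1, h2, h3⟩ := hbad (cvec k j.unop)
      exact ⟨⟨μ, h1, h2, h3⟩⟩
    obtain ⟨u, hu⟩ := nonempty_sections_of_finite_inverse_system (badFunctor S v w)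
    set U : ℕ → Λ.Mor := fun n => (u (op n)).1 with hUdef
    have hU : ∀ n, U n ∈ badSet S v w n := fun n => (u (op n)).2
    have hpre : ∀ {n m : ℕ} (h : n ≤ m) (hq : cvec k n ≤ Λ.d (U m)),
        preAt Λ (U m) (cvec k n) hq = U n := by
      intro n m h hq
      have h1 := hu (j := op m) (j' := op n) ((homOfLE h).op)
      have h2 := congrArg Subtype.val h1
      exact h2
    have hext : ∀ {n m : ℕ}, n ≤ m →
        ∃ (δ : Λ.Mor) (h : Λ.s (U n) = Λ.r δ), Λ.comp (U n) δ h = U m := by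
      intro n m h
      have hq : cvec k n ≤ Λ.d (U m) := by rw [(hU m).2.1]; exact cvec_mono h
      obtain ⟨γ, hγ, hd, hc⟩ := preAt_comp Λ (U m) (cvec k n) hq
      have e := hpre h hq
      have hγ' : Λ.s (U n) = Λ.r γ := by rw [← e]; exact hγ
      exact ⟨γ, hγ', (Λ.comp_congr' e hγ hγ').symm.trans hc⟩
    have hlift : ∀ {p q : NK k} {β : Λ.Mor} {n m : ℕ}, n ≤ m →
        IsSeg Λ (U n) p q β → IsSeg Λ (U m) p q β := by
      intro p q β n m h hIs
      obtain ⟨δ, hδ, hc⟩ := hext h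
      rw [← hc]
      exact isSeg_comp Λ hδ hIs
    have hq0 : ∀ q : NK k, q ≤ Λ.d (U (nmax q)) := fun q => by
      rw [(hU (nmax q)).2.1]; exact le_cvec_nmax q
    have xseg : ∀ (p q : NK k), p ≤ q → {β : Λ.Mor // IsSeg Λ (U (nmax q)) p q β} :=
      fun p q h => ⟨(isSeg_exists Λ (U (nmax q)) p q h (hq0 q)).choose,
        (isSeg_exists Λ (U (nmax q)) p q h (hq0 q)).choose_spec⟩
    have hxseg : ∀ (p q : NK k) (h : p ≤ q) (n : ℕ), nmax q ≤ n →
        IsSeg Λ (U n) p q (xseg p q h).1 :=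
      fun p q h n hn => hlift hn (xseg p q h).2
    have hx : ∃ x : InfPath Λ, ∀ (p q : NK k) (h : p ≤ q),
        IsSeg Λ (U (nmax q)) p q (x.seg p q h) := by
      refine ⟨⟨fun p q h => (xseg p q h).1, ?_, ?_, ?_⟩, fun p q h => (xseg p q h).2⟩
      · intro p q h; exact isSeg_d (xseg p q h).2
      · intro p q m h₁ h₂
        exact (isSeg_glue Λ h₁ h₂ (hxseg p q h₁ (nmax m) (nmax_mono h₂))
          (xseg q m h₂).2).choose
      · intro p q m h₁ h₂
        have hg := (isSeg_glue Λ h₁ h₂ (hxseg p q h₁ (nmax m) (nmax_mono h₂))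
          (xseg q m h₂).2).choose_spec
        exact isSeg_unique Λ (U (nmax m)) p m (h₁.trans h₂) hg (xseg p m (h₁.trans h₂)).2
    obtain ⟨x, hx⟩ := hx
    obtain ⟨p, μ, g, hsμ, hrμ⟩ := hcof x v
    obtain ⟨α, γ, h₂, h₁, hdα, hdβ, hc⟩ := hx p p le_rfl
    have hsrγ : Λ.s μ = Λ.r γ := by
      rw [← hsμ] at h₂; rw [Λ.s_ofObj] at h₂; exact h₂
    have hsU : Λ.s (U (nmax p)) = Λ.s γ := by
      rw [← hc, Λ.s_comp, Λ.s_comp]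
    exact (hU (nmax p)).2.2 ⟨g, Λ.comp μ γ hsrγ,
      by rw [Λ.r_comp]; exact hrμ, by rw [Λ.s_comp]; exact hsU.symm⟩
  · -- easy direction
    intro hyp x v
    have hd0 : Λ.d (x.seg 0 0 le_rfl) = 0 := by rw [x.d_seg]; funext i; simp
    obtain ⟨w₀, hw₀⟩ := Λ.eq_ofObj_of_d_eq_zero _ hd0
    obtain ⟨p, hp⟩ := hyp v w₀
    have hdp : Λ.d (x.seg 0 p (le0 p)) = p := by rw [x.d_seg]; funext i; simp
    have hcomp := x.comp_seg 0 0 p le_rfl (le0 p)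
    have hr : Λ.r (x.seg 0 p (le0 p)) = w₀ := by
      have h1 := congrArg Λ.r hcomp
      rw [Λ.r_comp, hw₀, Λ.r_ofObj] at h1
      exact h1.symm
    obtain ⟨g, lam, hrl, hsl⟩ := hp (x.seg 0 p (le0 p)) hr hdp
    have hsrc := x.src_seg 0 p p (le0 p) le_rfl
    have hdpp : Λ.d (x.seg p p le_rfl) = 0 := by rw [x.d_seg]; funext i; simp
    obtain ⟨u0, hu0⟩ := Λ.eq_ofObj_of_d_eq_zero _ hdpp
    refine ⟨p, lam, g, ?_, hrl⟩
    rw [hu0]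
    have hslu : Λ.s lam = u0 := by rw [hsl, hsrc, hu0, Λ.r_ofObj]
    rw [hslu]

end SSKG
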